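/- In the canonical Poisson bracket on ℝ^{2N} ({q_i,p_j} = δ_{ij}), the functions F^{(h,a)}_{ij} = p_i p_j + ((2a-1)/2)hω²(q_i p_j + q_j p_i) + ω² q_i q_j satisfy {F^{(h,a)}_{ij}, F^{(h,a)}_{kl}} = κ·(L_{jl}δ_{ik} + L_{jk}δ_{il} + L_{il}δ_{jk} + L_{ik}δ_{jl}), where L_{ij} = q_i p_j - q_j p_i and κ = ω²(1 - h²ω²(a - 1/2)²). -/

import Mathlib

/-- The canonical Poisson bracket `{f,g} = ∑ s (∂f/∂q_s ∂g/∂p_s - ∂g/∂q_s ∂f/∂p_s)`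
of two functions of `(q, p) ∈ ℝᴺ × ℝᴺ`, evaluated at the point `(q, p)`. -/
noncomputable def poissonBracket {N : ℕ} (f g : (Fin N → ℝ) → (Fin N → ℝ) → ℝ)
    (q p : Fin N → ℝ) : ℝ :=
  ∑ s : Fin N,
    (deriv (fun t => f (Function.update q s t) p) (q s) *
        deriv (fun t => g q (Function.update p s t)) (p s)
      - deriv (fun t => g (Function.update q s t) p) (q s) *
        deriv (fun t => f q (Function.update p s t)) (p s))

/-- Angular momentum `L_{ij} = q_i p_j - q_j p_i`. -/
def angMom {N : ℕ} (i j : Fin N) : (Fin N → ℝ) → (Fin N → ℝ) → ℝ :=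
  fun q p => q i * p j - q j * p i

/-- The discrete Demkov–Fradkin tensor component `F^{(h,a)}_{ij}`. -/
noncomputable def discreteDF {N : ℕ} (h ω a : ℝ) (i j : Fin N) : (Fin N → ℝ) → (Fin N → ℝ) → ℝ :=
  fun q p => p i * p j + (2 * a - 1) / 2 * h * ω ^ 2 * (q i * p j + q j * p i)
    + ω ^ 2 * q i * q j

lemma deriv_quad (α β γ x : ℝ) :
    deriv (fun t => α * t ^ 2 + β * t + γ) x = 2 * α * x + β := by
  have h1 : HasDerivAt (fun t : ℝ => t ^ 2) (2 * x) x := by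
    simpa using hasDerivAt_pow 2 x
  have H := ((h1.const_mul α).add ((hasDerivAt_id x).const_mul β)).add_const γ
  have := H.deriv
  simp only [id, Pi.add_apply] at this
  rw [this]; ring

lemma dq {N : ℕ} (h ω a : ℝ) (i j s : Fin N) (q p : Fin N → ℝ) :
    deriv (fun t => discreteDF h ω a i j (Function.update q s t) p) (q s) =
      (if i = s then 1 else 0) * ((2 * a - 1) / 2 * h * ω ^ 2 * p j + ω ^ 2 * q j)
      + (if j = s then 1 else 0) * ((2 * a - 1) / 2 * h * ω ^ 2 * p i + ω ^ 2 * q i) := by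
  simp only [discreteDF, Function.update_apply]
  by_cases hi : i = s <;> by_cases hj : j = s <;> simp [hi, hj]
  · rw [show (fun t => p s * p s + (2 * a - 1) / 2 * h * ω ^ 2 * (t * p s + t * p s) + ω ^ 2 * t * t)
        = fun t => (ω ^ 2) * t ^ 2 + (2 * ((2 * a - 1) / 2 * h * ω ^ 2) * p s) * t + p s * p s
        from funext fun t => by ring, deriv_quad]
    ring
  · rw [show (fun t => p s * p j + (2 * a - 1) / 2 * h * ω ^ 2 * (t * p j + q j * p s) + ω ^ 2 * t * q j)
        = fun t => (0:ℝ) * t ^ 2 + ((2 * a - 1) / 2 * h * ω ^ 2 * p j + ω ^ 2 * q j) * t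
            + (p s * p j + (2 * a - 1) / 2 * h * ω ^ 2 * (q j * p s))
        from funext fun t => by ring, deriv_quad]
    ring
  · rw [show (fun t => p i * p s + (2 * a - 1) / 2 * h * ω ^ 2 * (q i * p s + t * p i) + ω ^ 2 * q i * t)
        = fun t => (0:ℝ) * t ^ 2 + ((2 * a - 1) / 2 * h * ω ^ 2 * p i + ω ^ 2 * q i) * t
            + (p i * p s + (2 * a - 1) / 2 * h * ω ^ 2 * (q i * p s))
        from funext fun t => by ring, deriv_quad]
    ring

lemma dp {N : ℕ} (h ω a : ℝ) (i j s : Fin N) (q p : Fin N → ℝ) :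
    deriv (fun t => discreteDF h ω a i j q (Function.update p s t)) (p s) =
      (if i = s then 1 else 0) * (p j + (2 * a - 1) / 2 * h * ω ^ 2 * q j)
      + (if j = s then 1 else 0) * (p i + (2 * a - 1) / 2 * h * ω ^ 2 * q i) := by
  simp only [discreteDF, Function.update_apply]
  by_cases hi : i = s <;> by_cases hj : j = s <;> simp [hi, hj]
  · rw [show (fun y => y * y + (2 * a - 1) / 2 * h * ω ^ 2 * (q s * y + q s * y))
        = fun t => (1:ℝ) * t ^ 2 + (2 * ((2 * a - 1) / 2 * h * ω ^ 2) * q s) * t + 0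
        from funext fun t => by ring, deriv_quad]
    ring
  · rw [show (fun y => y * p j + (2 * a - 1) / 2 * h * ω ^ 2 * (q s * p j + q j * y))
        = fun t => (0:ℝ) * t ^ 2 + (p j + (2 * a - 1) / 2 * h * ω ^ 2 * q j) * t
            + (2 * a - 1) / 2 * h * ω ^ 2 * (q s * p j)
        from funext fun t => by ring, deriv_quad]
    ring
  · rw [show (fun y => p i * y + (2 * a - 1) / 2 * h * ω ^ 2 * (q i * y + q s * p i))
        = fun t => (0:ℝ) * t ^ 2 + (p i + (2 * a - 1) / 2 * h * ω ^ 2 * q i) * t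
            + (2 * a - 1) / 2 * h * ω ^ 2 * (q s * p i)
        from funext fun t => by ring, deriv_quad]
    ring

lemma sum2 {N : ℕ} (i k : Fin N) (X : ℝ) :
    (∑ s : Fin N, (if i = s then (1:ℝ) else 0) * (if k = s then 1 else 0) * X)
      = (if i = k then 1 else 0) * X := by
  rw [Finset.sum_eq_single i]
  · simp [eq_comm]
  · intro b _ hb
    simp [(Ne.symm hb : ¬ i = b)]
  · simp

theorem poisson_discreteDF_discreteDF {N : ℕ} (h ω a : ℝ) (i j k l : Fin N)
    (q p : Fin N → ℝ) :
    poissonBracket (discreteDF h ω a i j) (discreteDF h ω a k l) q p =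
      ω ^ 2 * (1 - h ^ 2 * ω ^ 2 * (a - 1 / 2) ^ 2) *
        (angMom j l q p * (if i = k then 1 else 0)
          + angMom j k q p * (if i = l then 1 else 0)
          + angMom i l q p * (if j = k then 1 else 0)
          + angMom i k q p * (if j = l then 1 else 0)) := by
  set c := (2 * a - 1) / 2 * h * ω ^ 2 with hc
  unfold poissonBracket
  simp only [dq, dp, ← hc]
  have expand : ∀ s : Fin N,
      ((if i = s then (1:ℝ) else 0) * (c * p j + ω ^ 2 * q j)
        + (if j = s then 1 else 0) * (c * p i + ω ^ 2 * q i)) *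
      ((if k = s then (1:ℝ) else 0) * (p l + c * q l)
        + (if l = s then 1 else 0) * (p k + c * q k))
      - ((if k = s then (1:ℝ) else 0) * (c * p l + ω ^ 2 * q l)
        + (if l = s then 1 else 0) * (c * p k + ω ^ 2 * q k)) *
      ((if i = s then (1:ℝ) else 0) * (p j + c * q j)
        + (if j = s then 1 else 0) * (p i + c * q i))
      =
      (if i = s then (1:ℝ) else 0) * (if k = s then 1 else 0) *
        ((c * p j + ω ^ 2 * q j) * (p l + c * q l) - (c * p l + ω ^ 2 * q l) * (p j + c * q j))
      + (if i = s then (1:ℝ) else 0) * (if l = s then 1 else 0) *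
        ((c * p j + ω ^ 2 * q j) * (p k + c * q k) - (c * p k + ω ^ 2 * q k) * (p j + c * q j))
      + (if j = s then (1:ℝ) else 0) * (if k = s then 1 else 0) *
        ((c * p i + ω ^ 2 * q i) * (p l + c * q l) - (c * p l + ω ^ 2 * q l) * (p i + c * q i))
      + (if j = s then (1:ℝ) else 0) * (if l = s then 1 else 0) *
        ((c * p i + ω ^ 2 * q i) * (p k + c * q k) - (c * p k + ω ^ 2 * q k) * (p i + c * q i)) := by
    intro s; ring
  rw [Finset.sum_congr rfl fun s _ => expand s]
  simp only [Finset.sum_add_distrib, sum2]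
  simp only [angMom, hc]
  ring
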